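/- The poset P on a_1,…,a_n, b_1,…,b_n, c_0,…,c_n (n ≥ 2) generated by c_0 < … < c_n, a_i < c_i, c_{i−1} < b_i (1 ≤ i ≤ n), and a_i < b_j (1 ≤ j < i ≤ n), contains the standard example S_n as a subposet (on the points a_1,…,a_n,b_1,…,b_n), and hence dim(P) ≥ n. -/

import Mathlib

variable {α : Type*}

/-- A linear extension of a partial order, given as a binary relation. -/
def IsLinExt [PartialOrder α] (r : α → α → Prop) : Prop :=
  IsLinearOrder α r ∧ ∀ x y : α, x ≤ y → r x y

/-- A realizer: a family of linear extensions whose intersection is the order. -/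
def IsRealizer [PartialOrder α] {d : ℕ} (L : Fin d → α → α → Prop) : Prop :=
  (∀ i, IsLinExt (L i)) ∧ ∀ x y : α, x ≤ y ↔ ∀ i, L i x y

/-- The order dimension of a poset: the least positive `d` admitting a realizer of size `d`. -/
noncomputable def pdim (α : Type*) [PartialOrder α] : ℕ :=
  sInf {d | 0 < d ∧ ∃ L : Fin d → α → α → Prop, IsRealizer L}

/-- The set of (ordered) incomparable pairs of a poset. -/
def IncPairs (α : Type*) [PartialOrder α] : Set (α × α) :=
  {p | ¬ p.1 ≤ p.2 ∧ ¬ p.2 ≤ p.1}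

/-- `r` reverses every pair `(x, y)` in `S`, i.e. `x > y` in `r`. -/
def Reverses [PartialOrder α] (r : α → α → Prop) (S : Set (α × α)) : Prop :=
  ∀ p ∈ S, r p.2 p.1 ∧ ¬ r p.1 p.2

/-- A set of incomparable pairs is reversible if some linear extension reverses all of them. -/
def Reversible [PartialOrder α] (S : Set (α × α)) : Prop :=
  ∃ r, IsLinExt r ∧ Reverses r S

/-- `d` linear extensions suffice to reverse every pair of `S` (i.e. `dim S ≤ d`). -/
def RealizerOn [PartialOrder α] (d : ℕ) (S : Set (α × α)) : Prop :=
  ∃ L : Fin d → α → α → Prop, (∀ i, IsLinExt (L i)) ∧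
    ∀ p ∈ S, ∃ i, L i p.2 p.1 ∧ ¬ L i p.1 p.2

/-- The height of a subset of a poset: the maximum size of a chain contained in it. -/
noncomputable def heightSet [PartialOrder α] (S : Set α) : ℕ :=
  sSup {n | ∃ t : Finset α, ↑t ⊆ S ∧ IsChain (· ≤ ·) (↑t : Set α) ∧ t.card = n}

/-- The height of a poset: the maximum size of a chain. -/
noncomputable def pheight (α : Type*) [PartialOrder α] : ℕ :=
  heightSet (Set.univ : Set α)

/-- The standard example `S_d`: minimal elements `a_i = inl i`, maximal elements
`b_j = inr j`, with `a_i < b_j` iff `i ≠ j`. -/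
def StdEx (d : ℕ) : Type := Fin d ⊕ Fin d

def StdEx.le {d : ℕ} : StdEx d → StdEx d → Prop
  | .inl i, .inl j => i = j
  | .inr i, .inr j => i = j
  | .inl i, .inr j => i ≠ j
  | .inr _, .inl _ => False

theorem StdEx.le_refl' {d : ℕ} (x : StdEx d) : StdEx.le x x := by
  cases x <;> simp [StdEx.le]

theorem StdEx.le_trans' {d : ℕ} (x y z : StdEx d)
    (hxy : StdEx.le x y) (hyz : StdEx.le y z) : StdEx.le x z := by
  cases x <;> cases y <;> cases z <;> simp_all [StdEx.le]

theorem StdEx.le_antisymm' {d : ℕ} (x y : StdEx d)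
    (hxy : StdEx.le x y) (hyx : StdEx.le y x) : x = y := by
  cases x <;> cases y <;> simp_all [StdEx.le] <;> (subst_vars; rfl)

instance (d : ℕ) : PartialOrder (StdEx d) where
  le := StdEx.le
  le_refl := StdEx.le_refl'
  le_trans := StdEx.le_trans'
  le_antisymm := StdEx.le_antisymm'

/-- The Kelly-like poset on `a_1, …, a_n, b_1, …, b_n, c_0, …, c_n`
(here `KP.a i` is `a_{i+1}`, `KP.b i` is `b_{i+1}`, `KP.c i` is `c_i`). -/
inductive KP (n : ℕ) : Type where
  | a : Fin n → KP n
  | b : Fin n → KP n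
  | c : Fin (n + 1) → KP n

/-- The order generated by `c_0 < ⋯ < c_n`, `a_i < c_i`, `c_{i-1} < b_i` (`1 ≤ i ≤ n`),
and `a_i < b_j` (`1 ≤ j < i ≤ n`), written out explicitly (its transitive closure). -/
def KP.le {n : ℕ} : KP n → KP n → Prop
  | .a i, .a j => i = j
  | .b i, .b j => i = j
  | .c i, .c j => i.1 ≤ j.1
  | .a i, .c j => i.1 + 1 ≤ j.1
  | .a i, .b j => i ≠ j
  | .c i, .b j => i.1 ≤ j.1
  | _, _ => False

theorem KP.le_refl' {n : ℕ} (x : KP n) : KP.le x x := by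
  cases x <;> simp [KP.le]

theorem KP.le_trans' {n : ℕ} (x y z : KP n)
    (hxy : KP.le x y) (hyz : KP.le y z) : KP.le x z := by
  cases x <;> cases y <;> cases z <;>
    simp_all only [KP.le, ne_eq, Fin.ext_iff] <;> first | omega | exact not_false

theorem KP.le_antisymm' {n : ℕ} (x y : KP n)
    (hxy : KP.le x y) (hyx : KP.le y x) : x = y := by
  cases x <;> cases y <;> simp_all only [KP.le, ne_eq, Fin.ext_iff] <;>
    first | omega | exact congrArg _ (Fin.ext (by omega))

instance (n : ℕ) : PartialOrder (KP n) where
  le := KP.le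
  le_refl := KP.le_refl'
  le_trans := KP.le_trans'
  le_antisymm := KP.le_antisymm'


section Aux

open Classical in
/-- Any nonempty finite partial order admits a realizer. -/
lemma exists_realizer_aux (β : Type*) [PartialOrder β] [Fintype β] [Nonempty β] :
    ∃ d : ℕ, 0 < d ∧ ∃ L : Fin d → β → β → Prop, IsRealizer L := by
  classical
  have hpair : ∀ p : β × β, ∃ r : β → β → Prop,
      IsLinExt r ∧ (¬ p.1 ≤ p.2 → ¬ r p.1 p.2) := by
    intro p
    by_cases hp : p.1 ≤ p.2
    · obtain ⟨s, hs, hle⟩ := extend_partialOrder ((· ≤ ·) : β → β → Prop)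
      exact ⟨s, ⟨hs, fun x y h => hle x y h⟩, fun h => absurd hp h⟩
    · -- add the pair p.2 < p.1 and extend
      set t : β → β → Prop := fun a b => a ≤ b ∨ (a ≤ p.2 ∧ p.1 ≤ b) with ht
      haveI : IsPartialOrder β t := by
        refine { refl := fun a => Or.inl le_rfl,
                 trans := ?_, antisymm := ?_ }
        · rintro a b c (hab | ⟨h1, h2⟩) (hbc | ⟨h3, h4⟩)
          · exact Or.inl (hab.trans hbc)
          · exact Or.inr ⟨hab.trans h3, h4⟩
          · exact Or.inr ⟨h1, h2.trans hbc⟩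
          · exact Or.inr ⟨h1, h4⟩
        · rintro a b (hab | ⟨h1, h2⟩) (hba | ⟨h3, h4⟩)
          · exact le_antisymm hab hba
          · exact absurd ((h4.trans hab).trans h3) hp
          · exact absurd ((h2.trans hba).trans h1) hp
          · exact absurd (h2.trans h3) hp
      obtain ⟨s, hs, hle⟩ := extend_partialOrder t
      refine ⟨s, ⟨hs, fun x y h => hle x y (Or.inl h)⟩, fun _ hr => ?_⟩
      have h21 : s p.2 p.1 := hle _ _ (Or.inr ⟨le_rfl, le_rfl⟩)
      have : p.1 = p.2 := hs.antisymm _ _ hr h21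
      exact hp (this ▸ le_rfl)
  choose r hr1 hr2 using hpair
  refine ⟨Fintype.card (β × β), Fintype.card_pos, ?_⟩
  set e := (Fintype.equivFin (β × β)).symm with he
  refine ⟨fun i => r (e i), fun i => hr1 _, fun x y => ?_⟩
  constructor
  · intro h i
    exact (hr1 (e i)).2 x y h
  · intro h
    by_contra hxy
    have := h (e.symm (x, y))
    simp only [Equiv.apply_symm_apply] at this
    exact hr2 (x, y) hxy this

end Aux

def KP.toSum {n : ℕ} : KP n → (Fin n ⊕ Fin n ⊕ Fin (n + 1))
  | .a i => Sum.inl i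
  | .b i => Sum.inr (Sum.inl i)
  | .c i => Sum.inr (Sum.inr i)

def KP.equivSum (n : ℕ) : KP n ≃ (Fin n ⊕ Fin n ⊕ Fin (n + 1)) where
  toFun := KP.toSum
  invFun x := match x with
    | Sum.inl i => KP.a i
    | Sum.inr (Sum.inl i) => KP.b i
    | Sum.inr (Sum.inr i) => KP.c i
  left_inv x := by cases x <;> rfl
  right_inv x := by rcases x with i | i | i <;> rfl

noncomputable instance (n : ℕ) : Fintype (KP n) :=
  Fintype.ofEquiv _ (KP.equivSum n).symm

instance (n : ℕ) : Nonempty (KP n) := ⟨KP.c 0⟩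

lemma kp_realizer_large {n : ℕ} {d : ℕ} (L : Fin d → KP n → KP n → Prop)
    (hL : IsRealizer L) : n ≤ d := by
  obtain ⟨hLin, hiff⟩ := hL
  have hnab : ∀ i : Fin n, ∃ k, ¬ L k (KP.a i) (KP.b i) := by
    intro i
    have : ¬ (KP.a i ≤ KP.b i) := by
      show ¬ KP.le _ _
      simp [KP.le]
    rw [hiff] at this
    push_neg at this
    exact this
  choose f hf using hnab
  have hinj : Function.Injective f := by
    intro i j hij
    by_contra hne
    have hfi := hf i
    have hfj := hf j
    rw [hij] at hfi
    set k := f j with hk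
    have htot := (hLin k).1.total
    have hbjaj : L k (KP.b j) (KP.a j) := (htot _ _).resolve_left hfj
    have haibj : L k (KP.a i) (KP.b j) := (hLin k).2 _ _ (show KP.le _ _ from hne)
    have hajbi : L k (KP.a j) (KP.b i) := (hLin k).2 _ _
      (show KP.le _ _ from fun h => hne h.symm)
    have htr := (hLin k).1.trans
    exact hfi (htr _ _ _ (htr _ _ _ haibj hbjaj) hajbi)
  simpa using Fintype.card_le_of_injective f hinj

/-- `KP n` contains the standard example `S_n` as a subposet (on the `a`'s and `b`'s),
hence `dim (KP n) ≥ n`. -/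
theorem kp_contains_standard_example (n : ℕ) (hn : 2 ≤ n) :
    Nonempty (StdEx n ↪o KP n) ∧ n ≤ pdim (KP n) := by
  constructor
  · refine ⟨OrderEmbedding.ofMapLEIff
      (fun x => match x with | .inl i => KP.a i | .inr j => KP.b j) ?_⟩
    intro x y
    cases x <;> cases y <;>
      · show KP.le _ _ ↔ StdEx.le _ _
        simp [KP.le, StdEx.le]
  · refine le_csInf ?_ ?_
    · obtain ⟨d, hd, L, hL⟩ := exists_realizer_aux (KP n)
      exact ⟨d, hd, L, hL⟩
    · rintro d ⟨hd, L, hL⟩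
      exact kp_realizer_large L hL
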